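/- For every real ν > 1/2, the Gamma function satisfies √(2e) · ((ν + 1/2)/e)^{ν + 1/2} < Γ(ν + 1) < √(2π) · ((ν + 1/2)/e)^{ν + 1/2}. -/

import Mathlib

open Real Filter Topology

noncomputable def batirG (x : ℝ) : ℝ :=
  Real.log (Real.Gamma (x + 1)) - (x + 1/2) * Real.log (x + 1/2) + (x + 1/2)

noncomputable def batirD (x : ℝ) : ℝ :=
  Real.log (x + 1) + 1 - (x + 3/2) * Real.log (x + 3/2) + (x + 1/2) * Real.log (x + 1/2)

lemma batirG_step {x : ℝ} (hx : 0 < x) : batirG (x + 1) = batirG x + batirD x := by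
  have h1 : Real.Gamma (x + 1 + 1) = (x + 1) * Real.Gamma (x + 1) :=
    Real.Gamma_add_one (by positivity)
  have h2 : Real.log ((x + 1) * Real.Gamma (x + 1)) =
      Real.log (x + 1) + Real.log (Real.Gamma (x + 1)) :=
    Real.log_mul (by positivity) (Real.Gamma_pos_of_pos (by positivity)).ne'
  unfold batirG batirD
  rw [h1, h2]
  ring_nf

lemma batirS1 {u : ℝ} (h0 : 0 < u) (h1 : u < 1) :
    2 * u ≤ Real.log (1 + u) - Real.log (1 - u) := by
  have h := hasSum_log_sub_log_of_abs_lt_one (x := u) (by rw [abs_of_pos h0]; exact h1)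
  have := le_hasSum h 0 (fun j _ => by positivity)
  simpa using this

lemma batirTail {u : ℝ} (h0 : 0 < u) (h1 : u < 1) :
    HasSum (fun n : ℕ => (2:ℝ) * (1 / (2 * n + 3)) * u ^ (2 * n + 3))
      (Real.log (1 + u) - Real.log (1 - u) - 2 * u) := by
  have habs : |u| < 1 := by rw [abs_of_pos h0]; exact h1
  have h := hasSum_log_sub_log_of_abs_lt_one (x := u) habs
  have hsum0 : (Real.log (1+u) - Real.log (1-u) - 2*u) +
      ∑ i ∈ Finset.range 1, (2:ℝ) * (1 / (2 * (i:ℝ) + 1)) * u ^ (2 * i + 1) =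
      Real.log (1+u) - Real.log (1-u) := by
    simp
  have key := (hasSum_nat_add_iff
    (f := fun k : ℕ => (2:ℝ) * (1 / (2 * (k:ℝ) + 1)) * u ^ (2 * k + 1)) 1).mpr
    (hsum0 ▸ h)
  have heq : (fun n : ℕ => (2:ℝ) * (1 / (2 * ((n+1:ℕ):ℝ) + 1)) * u ^ (2 * (n+1) + 1)) =
      (fun n : ℕ => (2:ℝ) * (1 / (2 * (n:ℝ) + 3)) * u ^ (2 * n + 3)) := by
    funext n
    have e : 2 * (n+1) + 1 = 2 * n + 3 := by ring
    rw [e]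
    push_cast
    ring_nf
  rw [heq] at key
  exact key

lemma batirS2 {u : ℝ} (h0 : 0 < u) (h1 : u < 1) :
    Real.log (1 + u) - Real.log (1 - u) + u * Real.log (1 - u^2) < 2 * u := by
  have habs2 : |u^2| < 1 := by
    rw [abs_of_pos (by positivity)]
    nlinarith
  have h2 : HasSum (fun n : ℕ => u * ((u^2) ^ (n + 1) / ((n:ℝ) + 1)))
      (u * -Real.log (1 - u^2)) :=
    (hasSum_pow_div_log_of_abs_lt_one habs2).mul_left u
  have hlt : Real.log (1 + u) - Real.log (1 - u) - 2 * u < u * -Real.log (1 - u^2) := by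
    refine hasSum_lt (i := 0) (fun n => ?_) ?_ (batirTail h0 h1) h2
    · have hre : u * ((u^2) ^ (n + 1) / ((n:ℝ) + 1)) = u ^ (2*n+3) * (1/((n:ℝ)+1)) := by
        rw [div_eq_mul_one_div]
        have : u * (u^2) ^ (n+1) = u ^ (2*n+3) := by
          rw [← pow_mul, ← pow_succ', show 2*(n+1)+1 = 2*n+3 from by omega]
        rw [← mul_assoc, this]
      rw [hre, mul_comm ((2:ℝ) * (1 / (2 * (n:ℝ) + 3))) _, mul_one_div, mul_one_div]
      apply mul_le_mul_of_nonneg_left _ (by positivity : (0:ℝ) ≤ u ^ (2*n+3))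
      rw [inv_eq_one_div, div_le_div_iff₀ (by positivity) (by positivity)]
      push_cast
      linarith
    · show (2:ℝ) * (1 / (2 * ((0:ℕ):ℝ) + 3)) * u ^ (2 * 0 + 3) <
        u * ((u^2) ^ ((0:ℕ) + 1) / (((0:ℕ):ℝ) + 1))
      norm_num
      nlinarith [pow_pos h0 3]
  linarith

lemma batir_u_facts {x : ℝ} (hx : 0 < x) :
    0 < 1/(2*(x+1)) ∧ 1/(2*(x+1)) < 1 ∧
    Real.log (x + 3/2) = Real.log (x+1) + Real.log (1 + 1/(2*(x+1))) ∧
    Real.log (x + 1/2) = Real.log (x+1) + Real.log (1 - 1/(2*(x+1))) := by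
  have h0 : (0:ℝ) < 1/(2*(x+1)) := by positivity
  have h1 : 1/(2*(x+1)) < 1 := by
    rw [div_lt_one (by positivity)]; linarith
  refine ⟨h0, h1, ?_, ?_⟩
  · have e : x + 3/2 = (x+1) * (1 + 1/(2*(x+1))) := by field_simp; ring
    rw [e, Real.log_mul (by positivity) (by positivity)]
  · have e : x + 1/2 = (x+1) * (1 - 1/(2*(x+1))) := by field_simp; ring
    rw [e, Real.log_mul (by positivity) (by nlinarith)]

lemma batirD_pos {x : ℝ} (hx : 0 < x) : 0 < batirD x := by
  obtain ⟨h0, h1, hl3, hl1⟩ := batir_u_facts hx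
  set u : ℝ := 1/(2*(x+1)) with hu
  have htu : (x+1) * u = 1/2 := by rw [hu]; field_simp
  have hl2 : Real.log (1 - u^2) = Real.log (1+u) + Real.log (1-u) := by
    rw [show (1:ℝ) - u^2 = (1+u)*(1-u) by ring,
      Real.log_mul (by positivity) (by nlinarith)]
  have hexp : batirD x =
      1 - (x+1) * (Real.log (1+u) - Real.log (1-u) + u * Real.log (1 - u^2)) := by
    unfold batirD
    rw [hl3, hl1, hl2]
    linear_combination (Real.log (1+u) + Real.log (1-u)) * htu
  have hs2 := batirS2 h0 h1
  have := mul_lt_mul_of_pos_left hs2 (show (0:ℝ) < x+1 by linarith)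
  rw [hexp]
  nlinarith

lemma batirD_hasDeriv {x : ℝ} (hx : 0 < x) :
    HasDerivAt batirD (1/(x+1) - Real.log (x+3/2) + Real.log (x+1/2)) x := by
  have h1 : HasDerivAt (fun y : ℝ => y + 1) 1 x := (hasDerivAt_id x).add_const 1
  have h3 : HasDerivAt (fun y : ℝ => y + 3/2) 1 x := (hasDerivAt_id x).add_const (3/2)
  have h2 : HasDerivAt (fun y : ℝ => y + 1/2) 1 x := (hasDerivAt_id x).add_const (1/2)
  have hlog1 : HasDerivAt (fun y : ℝ => Real.log (y+1)) (1/(x+1)) x := by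
    simpa using h1.log (by positivity)
  have hlog3 : HasDerivAt (fun y : ℝ => Real.log (y+3/2)) (1/(x+3/2)) x := by
    simpa using h3.log (by positivity)
  have hlog2 : HasDerivAt (fun y : ℝ => Real.log (y+1/2)) (1/(x+1/2)) x := by
    simpa using h2.log (by positivity)
  have hp3 : HasDerivAt (fun y : ℝ => (y+3/2) * Real.log (y+3/2))
      (1 * Real.log (x+3/2) + (x+3/2) * (1/(x+3/2))) x := h3.mul hlog3
  have hp2 : HasDerivAt (fun y : ℝ => (y+1/2) * Real.log (y+1/2))
      (1 * Real.log (x+1/2) + (x+1/2) * (1/(x+1/2))) x := h2.mul hlog2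
  have h := ((hlog1.add_const 1).sub hp3).add hp2
  unfold batirD
  refine h.congr_deriv ?_
  have e3 : (x+3/2) * (1/(x+3/2)) = 1 := by field_simp
  have e2 : (x+1/2) * (1/(x+1/2)) = 1 := by field_simp
  rw [e3, e2]; ring

lemma batirD_anti : AntitoneOn batirD (Set.Ici (1/2:ℝ)) := by
  have hpos : ∀ x : ℝ, x ∈ Set.Ici (1/2:ℝ) → (0:ℝ) < x := fun x hx => by
    simp only [Set.mem_Ici] at hx; linarith
  apply antitoneOn_of_deriv_nonpos (convex_Ici _)
  · exact fun x hx => (batirD_hasDeriv (hpos x hx)).continuousAt.continuousWithinAt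
  · intro x hx
    rw [interior_Ici] at hx
    exact (batirD_hasDeriv (by simp only [Set.mem_Ioi] at hx; linarith)).differentiableAt.differentiableWithinAt
  · intro x hx
    rw [interior_Ici] at hx
    have hx0 : (0:ℝ) < x := by simp only [Set.mem_Ioi] at hx; linarith
    rw [(batirD_hasDeriv hx0).deriv]
    obtain ⟨h0, h1, hl3, hl1⟩ := batir_u_facts hx0
    set u : ℝ := 1/(2*(x+1)) with hu
    have htu : (x+1) * u = 1/2 := by rw [hu]; field_simp
    have hs1 := batirS1 h0 h1
    have h2u : 2 * u = 1/(x+1) := by rw [hu]; field_simp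
    rw [hl3, hl1]
    linarith

lemma batirE1a {p q : ℝ} (hp : 0 < p) (hpq : p ≤ q) :
    q * Real.log q - q - (p * Real.log p - p) ≤ (q - p) * Real.log q := by
  have hq : 0 < q := lt_of_lt_of_le hp hpq
  have h := Real.log_le_sub_one_of_pos (show (0:ℝ) < q/p by positivity)
  have h2 : p * Real.log (q/p) ≤ q - p := by
    have := mul_le_mul_of_nonneg_left h hp.le
    calc p * Real.log (q/p) ≤ p * (q/p - 1) := this
      _ = q - p := by field_simp
  rw [Real.log_div hq.ne' hp.ne'] at h2
  nlinarith [h2]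

lemma batirE1b {p q : ℝ} (hp : 0 < p) (hpq : p ≤ q) :
    (q - p) * Real.log p ≤ q * Real.log q - q - (p * Real.log p - p) := by
  have hq : 0 < q := lt_of_lt_of_le hp hpq
  have h := Real.log_le_sub_one_of_pos (show (0:ℝ) < p/q by positivity)
  have h2 : q * Real.log (p/q) ≤ p - q := by
    have := mul_le_mul_of_nonneg_left h hq.le
    calc q * Real.log (p/q) ≤ q * (p/q - 1) := this
      _ = p - q := by field_simp
  rw [Real.log_div hp.ne' hq.ne'] at h2
  nlinarith [h2]

lemma batir_chord_upper {y t : ℝ} (hy : 0 < y) (ht0 : 0 ≤ t) (ht1 : t ≤ 1) :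
    Real.log (Real.Gamma (y + t + 1)) ≤
      Real.log (Real.Gamma (y + 1)) + t * Real.log (y + 1) := by
  have hmem1 : (y + 1) ∈ Set.Ioi (0:ℝ) := by simp; linarith
  have hmem2 : (y + 2) ∈ Set.Ioi (0:ℝ) := by simp; linarith
  have hc := Real.convexOn_log_Gamma.2 hmem1 hmem2 (by linarith : (0:ℝ) ≤ 1 - t) ht0
    (by ring : (1 - t) + t = 1)
  have hcombo : (1 - t) • (y + 1) + t • (y + 2) = y + t + 1 := by
    simp [smul_eq_mul]; ring
  rw [hcombo] at hc
  have hG2 : Real.Gamma (y + 2) = (y + 1) * Real.Gamma (y + 1) := by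
    have := Real.Gamma_add_one (show y + 1 ≠ 0 by positivity)
    rw [show y + 2 = y + 1 + 1 by ring, this]
  have hlog2 : Real.log (Real.Gamma (y + 2)) =
      Real.log (y + 1) + Real.log (Real.Gamma (y + 1)) := by
    rw [hG2, Real.log_mul (by positivity) (Real.Gamma_pos_of_pos (by positivity)).ne']
  simp only [Function.comp_apply, smul_eq_mul] at hc
  rw [hlog2] at hc
  nlinarith [hc]

lemma batir_chord_lower {y t : ℝ} (hy : 0 < y) (ht0 : 0 ≤ t) :
    Real.log (Real.Gamma (y + 1)) + t * Real.log y ≤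
      Real.log (Real.Gamma (y + t + 1)) := by
  have ht : (0:ℝ) < 1 + t := by linarith
  have hmem1 : y ∈ Set.Ioi (0:ℝ) := hy
  have hmem2 : (y + t + 1) ∈ Set.Ioi (0:ℝ) := by simp; linarith
  have hc := Real.convexOn_log_Gamma.2 hmem1 hmem2
    (by positivity : (0:ℝ) ≤ t / (1 + t)) (by positivity : (0:ℝ) ≤ 1 / (1 + t))
    (by field_simp; ring : t / (1 + t) + 1 / (1 + t) = 1)
  have hcombo : (t / (1 + t)) • y + (1 / (1 + t)) • (y + t + 1) = y + 1 := by
    simp only [smul_eq_mul]; field_simp; ring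
  rw [hcombo] at hc
  simp only [Function.comp_apply, smul_eq_mul] at hc
  have hGy : Real.log (Real.Gamma (y + 1)) = Real.log y + Real.log (Real.Gamma y) := by
    rw [Real.Gamma_add_one hy.ne', Real.log_mul hy.ne' (Real.Gamma_pos_of_pos hy).ne']
  have hmul := mul_le_mul_of_nonneg_left hc ht.le
  have hexp : (1 + t) * (t / (1 + t) * Real.log (Real.Gamma y) +
      1 / (1 + t) * Real.log (Real.Gamma (y + t + 1))) =
      t * Real.log (Real.Gamma y) + Real.log (Real.Gamma (y + t + 1)) := by
    field_simp
  rw [hexp] at hmul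
  nlinarith [hmul, hGy]

lemma batir_frac_bounds {y t : ℝ} (hy : 1 ≤ y) (ht0 : 0 ≤ t) (ht1 : t ≤ 1) :
    batirG y - (Real.log (y + 3/2) - Real.log y) ≤ batirG (y + t) ∧
    batirG (y + t) ≤ batirG y + (Real.log (y + 3/2) - Real.log y) := by
  have hy0 : (0:ℝ) < y := by linarith
  have hp : (0:ℝ) < y + 1/2 := by linarith
  have hpq : y + 1/2 ≤ y + t + 1/2 := by linarith
  have e1 := batirE1a hp hpq
  have e2 := batirE1b hp hpq
  have c1 := batir_chord_upper hy0 ht0 ht1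
  have c2 := batir_chord_lower hy0 ht0
  have hl1 : Real.log (y + t + 1/2) ≤ Real.log (y + 3/2) :=
    Real.log_le_log (by linarith) (by linarith)
  have hl2 : Real.log (y + 1/2) ≤ Real.log (y + 1) :=
    Real.log_le_log (by linarith) (by linarith)
  have hl3 : Real.log (y + 1) ≤ Real.log (y + 3/2) :=
    Real.log_le_log (by linarith) (by linarith)
  have hl4 : Real.log y ≤ Real.log (y + 1/2) :=
    Real.log_le_log hy0 (by linarith)
  have hl5 : Real.log y ≤ Real.log (y + t + 1/2) :=
    Real.log_le_log hy0 (by linarith)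
  -- t * log(y+t+1/2) ≤ t * log(y+3/2)
  have m1 := mul_le_mul_of_nonneg_left hl1 ht0
  constructor
  · unfold batirG
    have hfix : y + t + (1/2 : ℝ) = y + t + 1/2 := rfl
    nlinarith [mul_nonneg (by linarith : (0:ℝ) ≤ 1 - t)
      (by linarith : (0:ℝ) ≤ Real.log (y + 3/2) - Real.log y), m1, c2, e1]
  · unfold batirG
    nlinarith [mul_nonneg (by linarith : (0:ℝ) ≤ 1 - t)
      (by linarith : (0:ℝ) ≤ Real.log (y + 3/2) - Real.log y), c1, e2,
      mul_le_mul_of_nonneg_left hl4 ht0, mul_le_mul_of_nonneg_left hl3 ht0]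

lemma batir_gnat : Tendsto (fun n : ℕ => batirG n) atTop (𝓝 (Real.log (2*π) / 2)) := by
  have hev : ∀ᶠ n : ℕ in atTop, batirG n =
      Real.log (Stirling.stirlingSeq n) + (1/2)*Real.log 2 +
        (1/2 - ((n:ℝ)+1/2)*Real.log (1+1/(2*(n:ℝ)))) := by
    filter_upwards [eventually_ge_atTop 1] with n hn
    have hn0 : (0:ℝ) < n := by exact_mod_cast hn
    have hG : Real.log (Real.Gamma ((n:ℝ)+1)) = Real.log (n.factorial : ℝ) := by
      rw [Real.Gamma_nat_eq_factorial]
    have h2n : Real.log (2*(n:ℝ)) = Real.log 2 + Real.log n :=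
      Real.log_mul two_ne_zero hn0.ne'
    have hne : Real.log ((n:ℝ)/Real.exp 1) = Real.log n - 1 := by
      rw [Real.log_div hn0.ne' (Real.exp_ne_zero 1), Real.log_exp]
    have hfrac : Real.log (1+1/(2*(n:ℝ))) = Real.log ((n:ℝ)+1/2) - Real.log n := by
      rw [show (1:ℝ)+1/(2*(n:ℝ)) = ((n:ℝ)+1/2)/n by field_simp,
        Real.log_div (by positivity) hn0.ne']
    unfold batirG
    rw [hG, Stirling.log_stirlingSeq_formula, h2n, hne, hfrac]
    ring
  have T1 : Tendsto (fun n : ℕ => Real.log (Stirling.stirlingSeq n)) atTop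
      (𝓝 (Real.log (Real.sqrt π))) :=
    (Real.continuousAt_log (Real.sqrt_pos.mpr Real.pi_pos).ne').tendsto.comp
      Stirling.tendsto_stirlingSeq_sqrt_pi
  have T2a : Tendsto (fun n : ℕ => (n:ℝ) * Real.log (1+1/(2*(n:ℝ)))) atTop (𝓝 (1/2)) := by
    have h := (Real.continuousAt_log (Real.exp_pos (1/2)).ne').tendsto.comp
      (Real.tendsto_one_add_div_pow_exp (1/2))
    rw [Real.log_exp] at h
    apply h.congr
    intro n
    simp only [Function.comp_apply]
    rw [Real.log_pow]
    rw [show (1:ℝ) + (1/2)/(n:ℝ) = 1 + 1/(2*(n:ℝ)) by rw [div_div]]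
  have hbase : Tendsto (fun n : ℕ => Real.log (1+1/(2*(n:ℝ)))) atTop (𝓝 0) := by
    have h0 : Tendsto (fun n : ℕ => 1/(2*(n:ℝ))) atTop (𝓝 0) := by
      have := tendsto_one_div_atTop_nhds_zero_nat.const_mul (1/2:ℝ)
      rw [mul_zero] at this
      apply this.congr
      intro n
      rw [← div_div, one_div, mul_one_div]
    have h1 : Tendsto (fun n : ℕ => 1 + 1/(2*(n:ℝ))) atTop (𝓝 1) := by
      simpa using h0.const_add 1
    have := (Real.continuousAt_log one_ne_zero).tendsto.comp h1
    simpa [Function.comp_def] using this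
  have T2 : Tendsto (fun n : ℕ => ((n:ℝ)+1/2) * Real.log (1+1/(2*(n:ℝ)))) atTop
      (𝓝 (1/2)) := by
    have := T2a.add (hbase.const_mul (1/2:ℝ))
    rw [mul_zero, add_zero] at this
    apply this.congr
    intro n; ring
  have Tfin := (T1.add_const ((1/2)*Real.log 2)).add ((tendsto_const_nhds (x := (1/2:ℝ)) (f := atTop (α := ℕ))).sub T2)
  have : Real.log (Real.sqrt π) + (1/2)*Real.log 2 + (1/2 - 1/2) = Real.log (2*π)/2 := by
    rw [Real.log_sqrt Real.pi_pos.le, Real.log_mul two_ne_zero Real.pi_pos.ne']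
    ring
  rw [this] at Tfin
  exact Tendsto.congr' (hev.mono fun n h => h.symm) Tfin

lemma batir_logdiff (c : ℝ) (hc : 0 ≤ c) :
    Tendsto (fun n : ℕ => Real.log ((n:ℝ)+c) - Real.log n) atTop (𝓝 0) := by
  have h0 : Tendsto (fun n : ℕ => c * (1/(n:ℝ))) atTop (𝓝 0) := by
    have := tendsto_one_div_atTop_nhds_zero_nat.const_mul c
    rwa [mul_zero] at this
  have h1 : Tendsto (fun n : ℕ => 1 + c/(n:ℝ)) atTop (𝓝 1) := by
    have := h0.const_add (1:ℝ)
    rw [add_zero] at this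
    apply this.congr; intro n; rw [mul_one_div]
  have h2 := (Real.continuousAt_log one_ne_zero).tendsto.comp h1
  rw [Real.log_one] at h2
  apply h2.congr' ?_
  filter_upwards [eventually_ge_atTop 1] with n hn
  have hn0 : (0:ℝ) < n := by exact_mod_cast hn
  simp only [Function.comp_apply]
  rw [show (1:ℝ) + c/(n:ℝ) = ((n:ℝ)+c)/n by first | (field_simp; ring) | field_simp]
  rw [Real.log_div (by positivity) hn0.ne']

lemma batir_glim {x : ℝ} (hx : 0 ≤ x) :
    Tendsto (fun M : ℕ => batirG (x + M)) atTop (𝓝 (Real.log (2*π)/2)) := by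
  set t := x - (⌊x⌋₊ : ℝ) with htdef
  have ht0 : 0 ≤ t := by
    have := Nat.floor_le hx
    simp only [htdef]; linarith
  have ht1 : t ≤ 1 := by
    have := (Nat.lt_floor_add_one x).le
    simp only [htdef]; linarith
  have hNtend : Tendsto (fun M : ℕ => ⌊x⌋₊ + M) atTop atTop :=
    tendsto_atTop_mono (fun n => Nat.le_add_left n ⌊x⌋₊) tendsto_id
  have hA : Tendsto (fun M : ℕ => batirG ((⌊x⌋₊ + M : ℕ) : ℝ)) atTop
      (𝓝 (Real.log (2*π)/2)) := batir_gnat.comp hNtend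
  have hB : Tendsto (fun M : ℕ =>
      Real.log (((⌊x⌋₊ + M : ℕ) : ℝ) + 3/2) - Real.log ((⌊x⌋₊ + M : ℕ) : ℝ)) atTop
      (𝓝 0) := (batir_logdiff (3/2) (by norm_num)).comp hNtend
  have hlow := (hA.sub hB)
  rw [sub_zero] at hlow
  have hhigh := (hA.add hB)
  rw [add_zero] at hhigh
  refine tendsto_of_tendsto_of_tendsto_of_le_of_le' hlow hhigh ?_ ?_
  · filter_upwards [eventually_ge_atTop 1] with M hM
    have hy : (1:ℝ) ≤ ((⌊x⌋₊ + M : ℕ) : ℝ) := by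
      have : (1:ℕ) ≤ ⌊x⌋₊ + M := le_trans hM (Nat.le_add_left M ⌊x⌋₊)
      exact_mod_cast this
    have := (batir_frac_bounds hy ht0 ht1).1
    have hxe : x + (M:ℝ) = ((⌊x⌋₊ + M : ℕ) : ℝ) + t := by
      simp only [htdef]; push_cast; ring
    rw [hxe]
    linarith [this]
  · filter_upwards [eventually_ge_atTop 1] with M hM
    have hy : (1:ℝ) ≤ ((⌊x⌋₊ + M : ℕ) : ℝ) := by
      have : (1:ℕ) ≤ ⌊x⌋₊ + M := le_trans hM (Nat.le_add_left M ⌊x⌋₊)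
      exact_mod_cast this
    have := (batir_frac_bounds hy ht0 ht1).2
    have hxe : x + (M:ℝ) = ((⌊x⌋₊ + M : ℕ) : ℝ) + t := by
      simp only [htdef]; push_cast; ring
    rw [hxe]
    linarith [this]

lemma batir_upper {ν : ℝ} (hν : 0 < ν) : batirG ν < Real.log (2*π)/2 := by
  have hstep : batirG ν < batirG (ν + 1) := by
    rw [batirG_step hν]
    linarith [batirD_pos hν]
  have hmono : Monotone (fun m : ℕ => batirG ((ν + 1) + m)) := by
    apply monotone_nat_of_le_succ
    intro m
    have hpos : (0:ℝ) < (ν + 1) + m := by positivity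
    have : (ν + 1) + ((m:ℕ)+1 : ℕ) = ((ν + 1) + m) + 1 := by push_cast; ring
    rw [this, batirG_step hpos]
    linarith [batirD_pos hpos]
  have hlim := batir_glim (show (0:ℝ) ≤ ν + 1 by linarith)
  have h0 := hmono.ge_of_tendsto hlim 0
  simp only [Nat.cast_zero, add_zero] at h0
  linarith

lemma batir_lower {ν : ℝ} (hν : 1/2 ≤ ν) : batirG (1/2) ≤ batirG ν := by
  set e : ℕ → ℝ := fun M => batirG (ν + M) - batirG (1/2 + M) with he
  have hanti : ∀ M : ℕ, e (M+1) ≤ e M := by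
    intro M
    have h1 : (0:ℝ) < ν + M := by linarith [Nat.cast_nonneg (α := ℝ) M]
    have h2 : (0:ℝ) < 1/2 + M := by linarith [Nat.cast_nonneg (α := ℝ) M]
    have e1 : ν + ((M:ℕ)+1 : ℕ) = (ν + M) + 1 := by push_cast; ring
    have e2 : (1/2:ℝ) + ((M:ℕ)+1 : ℕ) = ((1/2:ℝ) + M) + 1 := by push_cast; ring
    simp only [he, e1, e2, batirG_step h1, batirG_step h2]
    have hd := batirD_anti (Set.mem_Ici.mpr (by linarith : (1/2:ℝ) ≤ 1/2 + M))
      (Set.mem_Ici.mpr (by linarith : (1/2:ℝ) ≤ ν + M)) (by linarith)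
    linarith
  have hmono : Antitone e := antitone_nat_of_succ_le hanti
  have hlim : Tendsto e atTop (𝓝 0) := by
    have := (batir_glim (show (0:ℝ) ≤ ν by linarith)).sub
      (batir_glim (show (0:ℝ) ≤ (1/2:ℝ) by norm_num))
    rwa [sub_self] at this
  have h0 : 0 ≤ e 0 := le_of_tendsto hlim (Eventually.of_forall fun M => hmono (Nat.zero_le M))
  simp only [he, Nat.cast_zero, add_zero] at h0
  linarith

lemma batir_half : 1/2 + (1/2) * Real.log 2 < batirG (1/2) := by
  have hG : Real.Gamma ((1/2:ℝ) + 1) = (1/2) * Real.sqrt π := by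
    rw [Real.Gamma_add_one (by norm_num), Real.Gamma_one_half_eq]
  have hval : batirG (1/2) = (1/2) * Real.log π - Real.log 2 + 1 := by
    unfold batirG
    rw [hG, Real.log_mul (by norm_num) (Real.sqrt_pos.mpr Real.pi_pos).ne',
      Real.log_sqrt Real.pi_pos.le]
    norm_num
    rw [show (1:ℝ)/2 = 2⁻¹ by norm_num, Real.log_inv]
    ring
  have hpi : Real.log (8 / Real.exp 1) < Real.log π := by
    apply Real.log_lt_log (by positivity)
    rw [div_lt_iff₀ (Real.exp_pos 1)]
    nlinarith [Real.exp_one_gt_d9, Real.pi_gt_d6]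
  have h8 : Real.log (8 / Real.exp 1) = 3 * Real.log 2 - 1 := by
    rw [Real.log_div (by norm_num) (Real.exp_ne_zero 1), Real.log_exp,
      show (8:ℝ) = 2^3 by norm_num, Real.log_pow]
    norm_num
  rw [hval]
  rw [h8] at hpi
  linarith

theorem gamma_batir_bounds (ν : ℝ) (hν : 1/2 < ν) :
    Real.sqrt (2 * Real.exp 1) * ((ν + 1/2) / Real.exp 1) ^ (ν + 1/2) < Real.Gamma (ν + 1) ∧
      Real.Gamma (ν + 1) < Real.sqrt (2 * Real.pi) * ((ν + 1/2) / Real.exp 1) ^ (ν + 1/2) := by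
  have hb : (0:ℝ) < (ν + 1/2) / Real.exp 1 := by positivity
  have hΓ : (0:ℝ) < Real.Gamma (ν + 1) := Real.Gamma_pos_of_pos (by linarith)
  have hlogb : Real.log ((ν + 1/2) / Real.exp 1) = Real.log (ν + 1/2) - 1 := by
    rw [Real.log_div (by positivity) (Real.exp_ne_zero 1), Real.log_exp]
  have hrpow : Real.log (((ν + 1/2) / Real.exp 1) ^ (ν + 1/2)) =
      (ν + 1/2) * (Real.log (ν + 1/2) - 1) := by
    rw [Real.log_rpow hb, hlogb]
  have hgB : Real.log (Real.Gamma (ν + 1)) =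
      batirG ν + (ν + 1/2) * Real.log (ν + 1/2) - (ν + 1/2) := by
    unfold batirG; ring
  constructor
  · rw [← Real.log_lt_log_iff (by positivity) hΓ]
    rw [Real.log_mul (by positivity) (Real.rpow_pos_of_pos hb _).ne', hrpow,
      Real.log_sqrt (by positivity), Real.log_mul (by norm_num) (Real.exp_ne_zero 1),
      Real.log_exp, hgB]
    have := batir_lower hν.le
    have := batir_half
    nlinarith
  · rw [← Real.log_lt_log_iff hΓ (by positivity)]
    rw [Real.log_mul (by positivity) (Real.rpow_pos_of_pos hb _).ne', hrpow,
      Real.log_sqrt (by positivity), hgB]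
    have := batir_upper (by linarith : (0:ℝ) < ν)
    nlinarith
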